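/- Every syntactically closed formula of the extended modal language ML⁺ (with nominals, ◇⁻¹, □⁻¹) is a closed formula: over any descriptive frame, if the propositional variables are interpreted by admissible sets and nominals by singletons, its extension is a closed set. Dually, every syntactically open formula is an open formula (its extension is open). -/

import Mathlib

/-- The diamond set operator: `◇A = {w : ∃v, R w v ∧ v ∈ A}`. -/
def diaOp {W : Type} (R : W → W → Prop) (A : Set W) : Set W := {w | ∃ v, R w v ∧ v ∈ A}

/-- The box set operator: `□A = {w : ∀v, R w v → v ∈ A}`. -/
def boxOp {W : Type} (R : W → W → Prop) (A : Set W) : Set W := {w | ∀ v, R w v → v ∈ A}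

/-- The inverse diamond set operator: `◇⁻¹A = {w : ∃v ∈ A, R v w} = R(A)`. -/
def idiaOp {W : Type} (R : W → W → Prop) (A : Set W) : Set W := {w | ∃ v, R v w ∧ v ∈ A}

/-- The inverse box set operator: `□⁻¹A = {w : ∀v, R v w → v ∈ A}`. -/
def iboxOp {W : Type} (R : W → W → Prop) (A : Set W) : Set W := {w | ∀ v, R v w → v ∈ A}
/-- A general frame: a Kripke frame together with a Boolean algebra of
admissible subsets closed under the diamond operator. -/
structure GenFrame (W : Type) where
  R : W → W → Prop
  adm : Set (Set W)
  univ_mem : Set.univ ∈ adm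
  compl_mem : ∀ X ∈ adm, Xᶜ ∈ adm
  inter_mem : ∀ X ∈ adm, ∀ Y ∈ adm, X ∩ Y ∈ adm
  dia_mem : ∀ X ∈ adm, diaOp R X ∈ adm

/-- The topology generated by the admissible sets as a base of clopen sets. -/
def GenFrame.top {W : Type} (F : GenFrame W) : TopologicalSpace W :=
  TopologicalSpace.generateFrom F.adm

/-- Differentiated: distinct points are separated by admissible sets. -/
def GenFrame.differentiated {W : Type} (F : GenFrame W) : Prop :=
  ∀ x y : W, x ≠ y → ∃ X ∈ F.adm, x ∈ X ∧ y ∉ X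

/-- Tight: `R x y` iff `x ∈ ◇Y` for every admissible `Y` containing `y`. -/
def GenFrame.tight {W : Type} (F : GenFrame W) : Prop :=
  ∀ x y : W, F.R x y ↔ ∀ Y ∈ F.adm, y ∈ Y → x ∈ diaOp F.R Y

/-- Compact: every family of admissible sets with the finite intersection
property has nonempty intersection. -/
def GenFrame.cpt {W : Type} (F : GenFrame W) : Prop :=
  ∀ C : Set (Set W), C ⊆ F.adm →
    (∀ D : Set (Set W), D ⊆ C → D.Finite → (⋂₀ D).Nonempty) →
    (⋂₀ C).Nonempty

/-- A descriptive frame is a differentiated, tight and compact general frame. -/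
def GenFrame.descriptive {W : Type} (F : GenFrame W) : Prop :=
  F.differentiated ∧ F.tight ∧ F.cpt
namespace MLPlusAux

variable {W : Type}

theorem empty_mem (F : GenFrame W) : (∅ : Set W) ∈ F.adm := by
  simpa using F.compl_mem _ F.univ_mem

theorem union_mem (F : GenFrame W) {X Y : Set W} (hX : X ∈ F.adm) (hY : Y ∈ F.adm) :
    X ∪ Y ∈ F.adm := by
  simpa [Set.compl_inter] using
    F.compl_mem _ (F.inter_mem _ (F.compl_mem _ hX) _ (F.compl_mem _ hY))

theorem sUnion_mem (F : GenFrame W) {D : Set (Set W)} (hfin : D.Finite) :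
    D ⊆ F.adm → ⋃₀ D ∈ F.adm := by
  refine Set.Finite.induction_on D hfin (fun _ => by simpa using empty_mem F) ?_
  intro X s _ _ ih hsub
  rw [Set.sUnion_insert]
  exact union_mem F (hsub (Set.mem_insert _ _))
    (ih fun Y hY => hsub (Set.mem_insert_of_mem _ hY))

theorem basis (F : GenFrame W) :
    @TopologicalSpace.IsTopologicalBasis W F.top F.adm := by
  letI := F.top
  refine ⟨?_, ?_, rfl⟩
  · intro t₁ h₁ t₂ h₂ x hx
    exact ⟨t₁ ∩ t₂, F.inter_mem _ h₁ _ h₂, hx, subset_rfl⟩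
  · exact Set.sUnion_eq_univ_iff.2 fun x => ⟨Set.univ, F.univ_mem, trivial⟩

theorem adm_open (F : GenFrame W) {X : Set W} (hX : X ∈ F.adm) : @IsOpen W F.top X := by
  letI := F.top; exact (basis F).isOpen hX

theorem adm_closed (F : GenFrame W) {X : Set W} (hX : X ∈ F.adm) : @IsClosed W F.top X := by
  letI := F.top; exact ⟨adm_open F (F.compl_mem _ hX)⟩

theorem closed_eq (F : GenFrame W) {A : Set W} (hA : @IsClosed W F.top A) :
    A = ⋂₀ {X | X ∈ F.adm ∧ A ⊆ X} := by
  letI := F.top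
  apply Set.Subset.antisymm
  · exact fun a ha X hX => hX.2 ha
  · intro w hw
    by_contra hwA
    obtain ⟨X, hXadm, hwX, hXsub⟩ :=
      (basis F).exists_subset_of_mem_open (show w ∈ Aᶜ from hwA) hA.isOpen_compl
    exact hw Xᶜ ⟨F.compl_mem _ hXadm, fun a ha hax => (hXsub hax) ha⟩ hwX

end MLPlusAux

namespace MLPlusAux

theorem dia_mono {R : W → W → Prop} {A B : Set W} (h : A ⊆ B) : diaOp R A ⊆ diaOp R B :=
  fun _ ⟨v, h1, h2⟩ => ⟨v, h1, h h2⟩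

theorem dia_closed (F : GenFrame W) (ht : F.tight) (hc : F.cpt) {A : Set W}
    (hA : @IsClosed W F.top A) : @IsClosed W F.top (diaOp F.R A) := by
  letI := F.top
  have key : diaOp F.R A = ⋂₀ {B | ∃ X ∈ F.adm, A ⊆ X ∧ B = diaOp F.R X} := by
    apply Set.Subset.antisymm
    · rintro w hw B ⟨X, hXadm, hAX, rfl⟩
      exact dia_mono hAX hw
    · intro w hw
      have hwd : ∀ X ∈ F.adm, A ⊆ X → w ∈ diaOp F.R X := fun X hX hAX =>
        hw _ ⟨X, hX, hAX, rfl⟩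
      set C : Set (Set W) := {X | X ∈ F.adm ∧ (A ⊆ X ∨ w ∉ diaOp F.R Xᶜ)} with hCdef
      have hCadm : C ⊆ F.adm := fun X hX => hX.1
      have hfip : ∀ D, D ⊆ C → D.Finite → (⋂₀ D).Nonempty := by
        intro D hDC hDfin
        by_contra hempty
        rw [Set.not_nonempty_iff_eq_empty] at hempty
        set Y : Set W := ⋃₀ ((fun X => Xᶜ) '' {X ∈ D | w ∉ diaOp F.R Xᶜ}) with hYdef
        have hYadm : Y ∈ F.adm := by
          apply sUnion_mem F ((hDfin.subset (Set.sep_subset _ _)).image _)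
          rintro Z ⟨X, hX, rfl⟩
          exact F.compl_mem _ (hCadm (hDC hX.1))
        have hAY : A ⊆ Y := by
          intro a ha
          have : a ∉ ⋂₀ D := by rw [hempty]; exact Set.notMem_empty a
          have hex : ∃ X ∈ D, a ∉ X := by
            by_contra hcon
            push_neg at hcon
            exact this fun X hX => hcon X hX
          obtain ⟨X, hXD, haX⟩ := hex
          rcases (hDC hXD).2 with h1 | h2
          · exact absurd (h1 ha) haX
          · exact ⟨Xᶜ, ⟨X, ⟨hXD, h2⟩, rfl⟩, haX⟩
        have hwY := hwd Y hYadm hAY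
        obtain ⟨v, hRv, Z, hZmem, hvZ⟩ := hwY
        obtain ⟨X, ⟨hXD, hXnd⟩, rfl⟩ := hZmem
        exact hXnd ⟨v, hRv, hvZ⟩
      obtain ⟨v, hv⟩ := hc C hCadm hfip
      have hvA : v ∈ A := by
        rw [closed_eq F hA]
        intro X hX
        exact hv X ⟨hX.1, Or.inl hX.2⟩
      have hRwv : F.R w v := by
        rw [ht w v]
        intro Y hY hvY
        by_contra hwd2
        have : v ∈ Yᶜ := hv Yᶜ ⟨F.compl_mem _ hY, Or.inr (by rwa [compl_compl])⟩
        exact this hvY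
      exact ⟨v, hRwv, hvA⟩
  rw [key]
  apply isClosed_sInter
  rintro B ⟨X, hXadm, _, rfl⟩
  exact adm_closed F (F.dia_mem _ hXadm)

theorem cpt_space (F : GenFrame W) (hc : F.cpt) : @CompactSpace W F.top := by
  letI := F.top
  constructor
  apply isCompact_of_finite_subfamily_closed
  intro ι Z hZ hempty
  classical
  by_contra hno
  push_neg at hno
  set C : Set (Set W) := {X | X ∈ F.adm ∧ ∃ i, Z i ⊆ X} with hCdef
  have hCadm : C ⊆ F.adm := fun X hX => hX.1
  have claim : ∀ D : Set (Set W), D.Finite → D ⊆ C →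
      ∃ t : Finset ι, (⋂ i ∈ t, Z i) ⊆ ⋂₀ D := by
    intro D hfin
    refine Set.Finite.induction_on D hfin (fun _ => ⟨∅, by simp⟩) ?_
    intro X s _ _ ih hsub
    obtain ⟨t, ht⟩ := ih fun Y hY => hsub (Set.mem_insert_of_mem _ hY)
    obtain ⟨_, i, hi⟩ := hsub (Set.mem_insert _ _)
    refine ⟨insert i t, ?_⟩
    rw [Set.sInter_insert]
    intro x hx
    have hx' : x ∈ ⋂ j ∈ t, Z j := by
      simp only [Set.mem_iInter] at hx ⊢
      exact fun j hj => hx j (Finset.mem_insert_of_mem hj)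
    refine ⟨hi ?_, ht hx'⟩
    simp only [Set.mem_iInter] at hx
    exact hx i (Finset.mem_insert_self _ _)
  have hfip : ∀ D, D ⊆ C → D.Finite → (⋂₀ D).Nonempty := by
    intro D hDC hfin
    obtain ⟨t, ht⟩ := claim D hfin hDC
    obtain ⟨x, -, hx⟩ := hno t
    exact ⟨x, ht hx⟩
  obtain ⟨v, hv⟩ := hc C hCadm hfip
  have : v ∈ Set.univ ∩ ⋂ i, Z i := by
    refine ⟨trivial, Set.mem_iInter.2 fun i => ?_⟩
    rw [closed_eq F (hZ i)]
    exact fun X hX => hv X ⟨hX.1, i, hX.2⟩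
  rw [hempty] at this
  exact this

theorem dia_open (F : GenFrame W) {A : Set W} (hA : @IsOpen W F.top A) :
    @IsOpen W F.top (diaOp F.R A) := by
  letI := F.top
  rw [isOpen_iff_forall_mem_open]
  rintro w ⟨v, hRv, hvA⟩
  obtain ⟨X, hXadm, hvX, hXA⟩ := (basis F).exists_subset_of_mem_open hvA hA
  exact ⟨diaOp F.R X, dia_mono hXA, adm_open F (F.dia_mem _ hXadm), ⟨v, hRv, hvX⟩⟩

theorem idia_closed (F : GenFrame W) (ht : F.tight) (hc : F.cpt) {A : Set W}
    (hA : @IsClosed W F.top A) : @IsClosed W F.top (idiaOp F.R A) := by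
  letI := F.top
  haveI := cpt_space F hc
  rw [← isOpen_compl_iff, isOpen_iff_forall_mem_open]
  intro w hw
  have hAcpt : IsCompact A := hA.isCompact
  let U : {Y : Set W // Y ∈ F.adm ∧ w ∈ Y} → Set W := fun Y => (diaOp F.R Y.1)ᶜ
  have hUopen : ∀ i, IsOpen (U i) := fun i => (adm_closed F (F.dia_mem _ i.2.1)).isOpen_compl
  have hcover : A ⊆ ⋃ i, U i := by
    intro v hv
    have hnR : ¬ F.R v w := fun h => hw ⟨v, h, hv⟩
    rw [ht v w] at hnR
    push_neg at hnR
    obtain ⟨Y, hY, hwY, hvd⟩ := hnR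
    exact Set.mem_iUnion.2 ⟨⟨Y, hY, hwY⟩, hvd⟩
  obtain ⟨t, htcov⟩ := hAcpt.elim_finite_subcover U hUopen hcover
  refine ⟨⋂ i ∈ t, (i : {Y : Set W // Y ∈ F.adm ∧ w ∈ Y}).1, ?_, ?_, ?_⟩
  · intro u hu hcontra
    obtain ⟨v, hRvu, hvA⟩ := hcontra
    obtain ⟨i, hit, hvU⟩ := by
      have := htcov hvA
      simp only [Set.mem_iUnion] at this
      exact this
    apply hvU
    have huY : u ∈ i.1 := by
      simp only [Set.mem_iInter] at hu
      exact hu i hit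
    exact (ht v u).1 hRvu i.1 i.2.1 huY
  · exact isOpen_biInter_finset fun i _ => adm_open F i.2.1
  · exact Set.mem_iInter₂.2 fun i _ => i.2.2

theorem singleton_closed (F : GenFrame W) (hd : F.differentiated) (x : W) :
    @IsClosed W F.top {x} := by
  letI := F.top
  rw [← isOpen_compl_iff, isOpen_iff_forall_mem_open]
  intro y hy
  have hxy : x ≠ y := fun h => hy (by simp [h])
  obtain ⟨X, hXadm, hxX, hyX⟩ := hd x y hxy
  refine ⟨Xᶜ, fun z hz hzx => ?_, adm_open F (F.compl_mem _ hXadm), hyX⟩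
  simp only [Set.mem_singleton_iff] at hzx
  exact hz (hzx ▸ hxX)

end MLPlusAux


/-- Formulas of the extended modal language ML⁺, with nominals and the
inverse modalities `◇⁻¹` (`idia`) and `□⁻¹` (`ibox`). -/
inductive MFp : Type where
  | bot
  | top
  | var (p : Nat)
  | nom (k : Nat)
  | neg (φ : MFp)
  | or (φ ψ : MFp)
  | and (φ ψ : MFp)
  | dia (φ : MFp)
  | box (φ : MFp)
  | idia (φ : MFp)
  | ibox (φ : MFp)

def MFp.imp (φ ψ : MFp) : MFp := MFp.or (MFp.neg φ) ψ

/-- Satisfaction for ML⁺: `V` interprets propositional variables,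
`g` assigns a world (i.e. a singleton) to each nominal. -/
def satp {W : Type} (R : W → W → Prop) (V : Nat → Set W) (g : Nat → W) : MFp → W → Prop
  | .bot, _ => False
  | .top, _ => True
  | .var p, w => w ∈ V p
  | .nom k, w => w = g k
  | .neg φ, w => ¬ satp R V g φ w
  | .or φ ψ, w => satp R V g φ w ∨ satp R V g ψ w
  | .and φ ψ, w => satp R V g φ w ∧ satp R V g ψ w
  | .dia φ, w => ∃ v, R w v ∧ satp R V g φ v
  | .box φ, w => ∀ v, R w v → satp R V g φ v
  | .idia φ, w => ∃ v, R v w ∧ satp R V g φ v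
  | .ibox φ, w => ∀ v, R v w → satp R V g φ v
mutual
/-- Syntactically closed: all occurrences of nominals and `◇⁻¹` are positive,
and all occurrences of `□⁻¹` are negative. -/
def synClosed : MFp → Prop
  | .bot => True
  | .top => True
  | .var _ => True
  | .nom _ => True
  | .neg φ => synOpen φ
  | .or φ ψ => synClosed φ ∧ synClosed ψ
  | .and φ ψ => synClosed φ ∧ synClosed ψ
  | .dia φ => synClosed φ
  | .box φ => synClosed φ
  | .idia φ => synClosed φ
  | .ibox _ => False

/-- Syntactically open: all occurrences of nominals and `◇⁻¹` are negative,
and all occurrences of `□⁻¹` are positive. -/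
def synOpen : MFp → Prop
  | .bot => True
  | .top => True
  | .var _ => True
  | .nom _ => False
  | .neg φ => synClosed φ
  | .or φ ψ => synOpen φ ∧ synOpen ψ
  | .and φ ψ => synOpen φ ∧ synOpen ψ
  | .dia φ => synOpen φ
  | .box φ => synOpen φ
  | .idia _ => False
  | .ibox φ => synOpen φ
end

/-- Every syntactically closed formula of ML⁺ is a closed formula, and every
syntactically open formula is an open formula: over a descriptive frame, with
propositional variables interpreted by admissible sets and nominals by
singletons, the extension is closed (resp. open). -/
theorem synClosed_closed_synOpen_open {W : Type} (F : GenFrame W) (hF : F.descriptive) :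
    (∀ φ : MFp, synClosed φ →
      ∀ V : Nat → Set W, (∀ q, V q ∈ F.adm) → ∀ g : Nat → W,
        @IsClosed W F.top {w | satp F.R V g φ w}) ∧
    (∀ φ : MFp, synOpen φ →
      ∀ V : Nat → Set W, (∀ q, V q ∈ F.adm) → ∀ g : Nat → W,
        @IsOpen W F.top {w | satp F.R V g φ w}) := by

  letI := F.top
  obtain ⟨hdiff, htight, hcpt⟩ := hF
  have main : ∀ φ : MFp, ∀ V : Nat → Set W, (∀ q, V q ∈ F.adm) → ∀ g : Nat → W,
      (synClosed φ → IsClosed {w | satp F.R V g φ w}) ∧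
      (synOpen φ → IsOpen {w | satp F.R V g φ w}) := by
    intro φ
    induction φ with
    | bot =>
      intro V hV g
      constructor <;> intro _
      · convert isClosed_empty (X := W); ext w; simp [satp]
      · convert isOpen_empty (X := W); ext w; simp [satp]
    | top =>
      intro V hV g
      constructor <;> intro _
      · convert isClosed_univ (X := W); ext w; simp [satp]
      · convert isOpen_univ (X := W); ext w; simp [satp]
    | var p =>
      intro V hV g
      exact ⟨fun _ => MLPlusAux.adm_closed F (hV p), fun _ => MLPlusAux.adm_open F (hV p)⟩
    | nom k =>
      intro V hV g
      refine ⟨fun _ => ?_, fun h => absurd h (by simp [synOpen])⟩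
      have : {w | satp F.R V g (.nom k) w} = {g k} := by ext w; simp [satp]
      rw [this]
      exact MLPlusAux.singleton_closed F hdiff (g k)
    | neg φ ih =>
      intro V hV g
      have e : {w | satp F.R V g (.neg φ) w} = {w | satp F.R V g φ w}ᶜ := by
        ext w; simp [satp]
      constructor <;> intro h <;> rw [e] <;>
        simp only [synClosed, synOpen] at h
      · exact ((ih V hV g).2 h).isClosed_compl
      · exact ((ih V hV g).1 h).isOpen_compl
    | or φ ψ ihφ ihψ =>
      intro V hV g
      have e : {w | satp F.R V g (.or φ ψ) w} =
          {w | satp F.R V g φ w} ∪ {w | satp F.R V g ψ w} := by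
        ext w; simp [satp]
      constructor <;> intro h <;> rw [e] <;>
        simp only [synClosed, synOpen] at h
      · exact ((ihφ V hV g).1 h.1).union ((ihψ V hV g).1 h.2)
      · exact ((ihφ V hV g).2 h.1).union ((ihψ V hV g).2 h.2)
    | and φ ψ ihφ ihψ =>
      intro V hV g
      have e : {w | satp F.R V g (.and φ ψ) w} =
          {w | satp F.R V g φ w} ∩ {w | satp F.R V g ψ w} := by
        ext w; simp [satp]
      constructor <;> intro h <;> rw [e] <;>
        simp only [synClosed, synOpen] at h
      · exact ((ihφ V hV g).1 h.1).inter ((ihψ V hV g).1 h.2)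
      · exact ((ihφ V hV g).2 h.1).inter ((ihψ V hV g).2 h.2)
    | dia φ ih =>
      intro V hV g
      have e : {w | satp F.R V g (.dia φ) w} = diaOp F.R {w | satp F.R V g φ w} := by
        ext w; simp [satp, diaOp]
      constructor <;> intro h <;> rw [e] <;>
        simp only [synClosed, synOpen] at h
      · exact MLPlusAux.dia_closed F htight hcpt ((ih V hV g).1 h)
      · exact MLPlusAux.dia_open F ((ih V hV g).2 h)
    | box φ ih =>
      intro V hV g
      have e : {w | satp F.R V g (.box φ) w} =
          (diaOp F.R {w | satp F.R V g φ w}ᶜ)ᶜ := by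
        ext w; simp [satp, diaOp]
      constructor <;> intro h <;> rw [e] <;>
        simp only [synClosed, synOpen] at h
      · exact (MLPlusAux.dia_open F ((ih V hV g).1 h).isOpen_compl).isClosed_compl
      · exact (MLPlusAux.dia_closed F htight hcpt ((ih V hV g).2 h).isClosed_compl).isOpen_compl
    | idia φ ih =>
      intro V hV g
      have e : {w | satp F.R V g (.idia φ) w} = idiaOp F.R {w | satp F.R V g φ w} := by
        ext w; simp [satp, idiaOp]
      refine ⟨fun h => ?_, fun h => absurd h (by simp [synOpen])⟩
      rw [e]
      simp only [synClosed] at h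
      exact MLPlusAux.idia_closed F htight hcpt ((ih V hV g).1 h)
    | ibox φ ih =>
      intro V hV g
      have e : {w | satp F.R V g (.ibox φ) w} =
          (idiaOp F.R {w | satp F.R V g φ w}ᶜ)ᶜ := by
        ext w; simp [satp, idiaOp]
      refine ⟨fun h => absurd h (by simp [synClosed]), fun h => ?_⟩
      rw [e]
      simp only [synOpen] at h
      exact (MLPlusAux.idia_closed F htight hcpt ((ih V hV g).2 h).isClosed_compl).isOpen_compl
  exact ⟨fun φ h V hV g => (main φ V hV g).1 h, fun φ h V hV g => (main φ V hV g).2 h⟩
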